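/- Let c, δ, γ₀ > 0 with (1/2)γ₀^{-1} log β^{-1} − 2c ≥ δ γ₀^{-1} for some β ∈ (0,1), let ρ > 0, and let n₀ ≤ n₁ ≤ n₂ ≤ ... be integers with associated times t_{n₀} ≤ t_{n₁} ≤ ... satisfying t_{n_r} − t_{n_{r-1}} ≤ ρ√γ₀ for all r ≥ 1 and n_{r-1} − n₀ ≥ (t_{n_{r-1}} − t_{n₀})/γ₀. Then for every ℓ ≥ 1: Σ_{r=1}^ℓ e^{−2c(t_{n_ℓ} − t_{n_r})} β^{(n_{r-1} − n₀)/2} (t_{n_r} − t_{n_{r-1}}) ≤ e^{2cρ√γ₀} (ρ√γ₀ + δ^{-1}γ₀) e^{−2c(t_{n_ℓ} − t_{n₀})}. -/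

import Mathlib

open Real

lemma stmt17_tele (g : ℕ → ℝ) (ℓ : ℕ) :
    ∑ i ∈ Finset.Icc 1 ℓ, (g (i-1) - g i) = g 0 - g ℓ := by
  induction ℓ with
  | zero => simp
  | succ m ih =>
    rw [Finset.sum_Icc_succ_top (by omega), ih]
    simp

lemma stmt17_key (a x y : ℝ) (ha : 0 < a) (hxy : x ≤ y) :
    Real.exp (-a*x) * (y - x) ≤
      (Real.exp (-a*x) - Real.exp (-a*y))/a
        + (y-x)*(Real.exp (-a*x) - Real.exp (-a*y)) := by
  have hz : a*(y-x) + 1 ≤ Real.exp (a*(y-x)) := Real.add_one_le_exp _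
  have hE : Real.exp (-a*x) = Real.exp (-a*y) * Real.exp (a*(y-x)) := by
    rw [← Real.exp_add]; ring_nf
  have hp := Real.exp_pos (-a*y)
  have h2 : Real.exp (-a*y) * (a*(y-x)) ≤ Real.exp (-a*x) - Real.exp (-a*y) := by
    nlinarith
  have h3 : (y-x) * Real.exp (-a*y) ≤ (Real.exp (-a*x) - Real.exp (-a*y))/a := by
    rw [le_div_iff₀ ha]; nlinarith
  nlinarith

/-- the key summation estimate in the proof of the main theorem.
`T r = t_{n_r}` are the partition times, `n : ℕ → ℕ` the partition indices. Under the
hypotheses (i) `T r − T (r−1) ≤ ρ√γ₀`, (ii) `n_{r−1} − n₀ ≥ (T(r−1) − T 0)/γ₀`, and the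
margin condition `(1/2)γ₀⁻¹ log β⁻¹ − 2c ≥ δγ₀⁻¹`, one has for every `ℓ ≥ 1`:
`Σ_{r=1}^ℓ e^{−2c(T ℓ − T r)} β^{(n_{r−1} − n₀)/2} (T r − T (r−1))
   ≤ e^{2cρ√γ₀} (ρ√γ₀ + δ⁻¹γ₀) e^{−2c(T ℓ − T 0)}`. -/
theorem stmt17_summation_estimate
    (c δ γ₀ ρ β : ℝ) (hc : 0 < c) (hδ : 0 < δ) (hγ₀ : 0 < γ₀) (hρ : 0 < ρ)
    (hβ0 : 0 < β) (hβ1 : β < 1)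
    (hmargin : δ * γ₀⁻¹ ≤ (1 / 2) * γ₀⁻¹ * Real.log β⁻¹ - 2 * c)
    (n : ℕ → ℕ) (hnmono : Monotone n)
    (T : ℕ → ℝ) (hTmono : Monotone T)
    (hstep : ∀ r : ℕ, 1 ≤ r → T r - T (r - 1) ≤ ρ * Real.sqrt γ₀)
    (hgap : ∀ r : ℕ, 1 ≤ r → (T (r - 1) - T 0) / γ₀ ≤ (n (r - 1) : ℝ) - (n 0 : ℝ)) :
    ∀ ℓ : ℕ, 1 ≤ ℓ →
      ∑ r ∈ Finset.Icc 1 ℓ,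
          Real.exp (-(2 * c) * (T ℓ - T r))
            * β ^ (((n (r - 1) : ℝ) - (n 0 : ℝ)) / 2)
            * (T r - T (r - 1))
        ≤ Real.exp (2 * c * ρ * Real.sqrt γ₀) * (ρ * Real.sqrt γ₀ + δ⁻¹ * γ₀)
            * Real.exp (-(2 * c) * (T ℓ - T 0)) := by
  intro ℓ hℓ
  set a : ℝ := δ * γ₀⁻¹ with ha_def
  have ha : 0 < a := mul_pos hδ (inv_pos.mpr hγ₀)
  have hsq : 0 < Real.sqrt γ₀ := Real.sqrt_pos.mpr hγ₀
  set g : ℕ → ℝ := fun r => Real.exp (-a * (T r - T 0)) with hg_def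
  -- step A: termwise bound
  have stepA : ∀ r ∈ Finset.Icc 1 ℓ,
      Real.exp (-(2 * c) * (T ℓ - T r))
        * β ^ (((n (r - 1) : ℝ) - (n 0 : ℝ)) / 2) * (T r - T (r - 1))
      ≤ (Real.exp (2 * c * ρ * Real.sqrt γ₀) * Real.exp (-(2 * c) * (T ℓ - T 0)))
            * (g (r-1) * (T r - T (r - 1))) := by
    intro r hr
    simp only [Finset.mem_Icc] at hr
    obtain ⟨hr1, hrℓ⟩ := hr
    have h01 : T 0 ≤ T (r-1) := hTmono (Nat.zero_le _)
    have h12 : T (r-1) ≤ T r := hTmono (by omega)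
    have hΔ : 0 ≤ T r - T (r-1) := by linarith
    have hn : (n 0 : ℝ) ≤ (n (r-1) : ℝ) := by exact_mod_cast hnmono (Nat.zero_le _)
    have hlog : 0 < Real.log β⁻¹ := by
      rw [Real.log_inv]; linarith [Real.log_neg hβ0 hβ1]
    have hgapr := hgap r hr1
    -- bound the power term
    have hpow : β ^ (((n (r - 1) : ℝ) - (n 0 : ℝ)) / 2)
        ≤ Real.exp (-(2*c + a) * (T (r-1) - T 0)) := by
      rw [Real.rpow_def_of_pos hβ0]
      apply Real.exp_le_exp.mpr
      have hlb : Real.log β = -Real.log β⁻¹ := by rw [Real.log_inv]; ring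
      rw [hlb]
      have hx : (T (r-1) - T 0) / γ₀ / 2 ≤ ((n (r - 1) : ℝ) - (n 0 : ℝ)) / 2 := by
        linarith
      have hmargin' : 2*c + a ≤ (1/2) * γ₀⁻¹ * Real.log β⁻¹ := by
        rw [ha_def]; linarith
      calc -Real.log β⁻¹ * (((n (r - 1) : ℝ) - (n 0 : ℝ)) / 2)
          ≤ -Real.log β⁻¹ * ((T (r-1) - T 0) / γ₀ / 2) := by
            have := mul_le_mul_of_nonneg_left hx (le_of_lt hlog)
            nlinarith
        _ = -((1/2) * γ₀⁻¹ * Real.log β⁻¹) * (T (r-1) - T 0) := by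
            field_simp
        _ ≤ -(2*c + a) * (T (r-1) - T 0) := by
            have h0 : 0 ≤ T (r-1) - T 0 := by linarith
            nlinarith
    have hstepr := hstep r hr1
    have hexp1 : Real.exp (-(2 * c) * (T ℓ - T r)) * Real.exp (-(2*c + a) * (T (r-1) - T 0))
        ≤ Real.exp (2 * c * ρ * Real.sqrt γ₀) * Real.exp (-(2 * c) * (T ℓ - T 0)) * g (r-1) := by
      rw [hg_def]
      rw [← Real.exp_add, ← Real.exp_add, ← Real.exp_add]
      apply Real.exp_le_exp.mpr
      nlinarith
    calc Real.exp (-(2 * c) * (T ℓ - T r))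
            * β ^ (((n (r - 1) : ℝ) - (n 0 : ℝ)) / 2) * (T r - T (r - 1))
        ≤ Real.exp (-(2 * c) * (T ℓ - T r))
            * Real.exp (-(2*c + a) * (T (r-1) - T 0)) * (T r - T (r - 1)) := by
          apply mul_le_mul_of_nonneg_right _ hΔ
          exact mul_le_mul_of_nonneg_left hpow (le_of_lt (Real.exp_pos _))
      _ ≤ (Real.exp (2 * c * ρ * Real.sqrt γ₀) * Real.exp (-(2 * c) * (T ℓ - T 0)))
            * (g (r-1) * (T r - T (r - 1))) := by
          rw [← mul_assoc]
          exact mul_le_mul_of_nonneg_right hexp1 hΔ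
  -- step B: the weighted Riemann sum bound
  have stepB : ∑ r ∈ Finset.Icc 1 ℓ, g (r-1) * (T r - T (r - 1))
      ≤ ρ * Real.sqrt γ₀ + δ⁻¹ * γ₀ := by
    have hterm : ∀ r ∈ Finset.Icc 1 ℓ, g (r-1) * (T r - T (r - 1))
        ≤ (a⁻¹ + ρ * Real.sqrt γ₀) * (g (r-1) - g r) := by
      intro r hr
      simp only [Finset.mem_Icc] at hr
      have h12 : T (r-1) ≤ T r := hTmono (by omega)
      have hkey := stmt17_key a (T (r-1) - T 0) (T r - T 0) ha (by linarith)
      have hmono : g r ≤ g (r-1) := by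
        rw [hg_def]
        apply Real.exp_le_exp.mpr
        nlinarith
      have hstepr := hstep r hr.1
      have hrw : T r - T 0 - (T (r-1) - T 0) = T r - T (r-1) := by ring
      rw [hrw] at hkey
      calc g (r-1) * (T r - T (r - 1))
          ≤ (g (r-1) - g r)/a + (T r - T (r-1)) * (g (r-1) - g r) := hkey
        _ ≤ (a⁻¹ + ρ * Real.sqrt γ₀) * (g (r-1) - g r) := by
            rw [div_eq_inv_mul]
            nlinarith
    calc ∑ r ∈ Finset.Icc 1 ℓ, g (r-1) * (T r - T (r - 1))
        ≤ ∑ r ∈ Finset.Icc 1 ℓ, (a⁻¹ + ρ * Real.sqrt γ₀) * (g (r-1) - g r) :=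
          Finset.sum_le_sum hterm
      _ = (a⁻¹ + ρ * Real.sqrt γ₀) * (g 0 - g ℓ) := by
          rw [← Finset.mul_sum]
          congr 1
          exact stmt17_tele g ℓ
      _ ≤ ρ * Real.sqrt γ₀ + δ⁻¹ * γ₀ := by
          have hg0 : g 0 = 1 := by rw [hg_def]; simp
          have hgℓ : 0 < g ℓ := Real.exp_pos _
          have hainv : a⁻¹ = δ⁻¹ * γ₀ := by
            rw [ha_def]; field_simp
          have hpos : 0 < a⁻¹ + ρ * Real.sqrt γ₀ := by positivity
          nlinarith
  calc ∑ r ∈ Finset.Icc 1 ℓ,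
          Real.exp (-(2 * c) * (T ℓ - T r))
            * β ^ (((n (r - 1) : ℝ) - (n 0 : ℝ)) / 2) * (T r - T (r - 1))
      ≤ ∑ r ∈ Finset.Icc 1 ℓ,
          (Real.exp (2 * c * ρ * Real.sqrt γ₀) * Real.exp (-(2 * c) * (T ℓ - T 0)))
            * (g (r-1) * (T r - T (r - 1))) := Finset.sum_le_sum stepA
    _ = (Real.exp (2 * c * ρ * Real.sqrt γ₀) * Real.exp (-(2 * c) * (T ℓ - T 0)))
          * ∑ r ∈ Finset.Icc 1 ℓ, g (r-1) * (T r - T (r - 1)) := by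
        rw [Finset.mul_sum]
    _ ≤ (Real.exp (2 * c * ρ * Real.sqrt γ₀) * Real.exp (-(2 * c) * (T ℓ - T 0)))
          * (ρ * Real.sqrt γ₀ + δ⁻¹ * γ₀) := by
        apply mul_le_mul_of_nonneg_left stepB
        positivity
    _ = Real.exp (2 * c * ρ * Real.sqrt γ₀) * (ρ * Real.sqrt γ₀ + δ⁻¹ * γ₀)
          * Real.exp (-(2 * c) * (T ℓ - T 0)) := by ring
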